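/- For every integer p, every binary vector x : Fin n → ℤ and every z : Fin n → ℤ, the square of an XP operator satisfies (XP_N(p|x|z))^2 = XP_N(2p | 0 | 2z) * D_N(2 • (x * z)); in particular the square of any XP operator with binary x-component is a diagonal XP operator. -/

import Mathlib

open Matrix

/-- `ω = exp(πi/N)`. -/
noncomputable def omN (N : ℕ) : ℂ := Complex.exp (Real.pi * Complex.I / N)

/-- The Pauli X matrix. -/
def Xm : Matrix (Fin 2) (Fin 2) ℂ := !![0, 1; 1, 0]

/-- The precision-`N` phase matrix `P = diag(1, ω²)`. -/
noncomputable def Pm (N : ℕ) : Matrix (Fin 2) (Fin 2) ℂ := !![1, 0; 0, (omN N) ^ 2]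

/-- The precision-`N` XP operator `XP_N(p|x|z)` on `n` qubits, the matrix indexed by bit
strings whose `(f, e)` entry is `ω^p * ∏ i, (X^(x i) * P^(z i)) (f i) (e i)`. -/
noncomputable def XP (N n : ℕ) (p : ℤ) (x z : Fin n → ℤ) :
    Matrix (Fin n → Fin 2) (Fin n → Fin 2) ℂ :=
  Matrix.of fun f e => (omN N) ^ p * ∏ i, ((Xm ^ (x i)) * (Pm N) ^ (z i)) (f i) (e i)

/-- The antisymmetric operator `D_N(z) = XP_N(∑ i, z i | 0 | -z)`. -/
noncomputable def DN (N n : ℕ) (z : Fin n → ℤ) :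
    Matrix (Fin n → Fin 2) (Fin n → Fin 2) ℂ :=
  XP N n (∑ i, z i) 0 (-z)

/-- A vector is binary if every entry is 0 or 1. -/
def IsBinary {n : ℕ} (x : Fin n → ℤ) : Prop := ∀ i, x i = 0 ∨ x i = 1

lemma omN_ne (N : ℕ) : omN N ≠ 0 := Complex.exp_ne_zero _

lemma Pm_det_unit (N : ℕ) : IsUnit (Pm N).det := by
  have : (Pm N).det = (omN N) ^ 2 := by simp [Pm, Matrix.det_fin_two_of]
  rw [this]
  exact isUnit_iff_ne_zero.2 (pow_ne_zero _ (omN_ne N))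

lemma Pm_inv (N : ℕ) : (Pm N)⁻¹ = !![1, 0; 0, (omN N) ^ (-2 : ℤ)] := by
  apply Matrix.inv_eq_right_inv
  rw [Pm, Matrix.mul_fin_two]
  have : (omN N) ^ 2 * (omN N) ^ (-2 : ℤ) = 1 := by
    rw [← zpow_natCast (omN N) 2, ← zpow_add₀ (omN_ne N)]
    norm_num
  rw [Matrix.one_fin_two]
  simp only [mul_one, one_mul, mul_zero, zero_mul, add_zero, zero_add, this]

lemma Pm_zpow (N : ℕ) (z : ℤ) : Pm N ^ z = !![1, 0; 0, (omN N) ^ (2 * z)] := by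
  induction z using Int.induction_on with
  | zero => simp [Matrix.one_fin_two]
  | succ k ih =>
      rw [zpow_add_one (Pm_det_unit N), ih, Pm, Matrix.mul_fin_two]
      have h1 : (2 : ℤ) * (k + 1) = 2 * k + 2 := by ring
      have h2 : (omN N) ^ (2 * ((k : ℤ) + 1)) = (omN N) ^ (2 * (k : ℤ)) * (omN N) ^ 2 := by
        rw [h1, zpow_add₀ (omN_ne N), zpow_two]
        ring
      simp [h2]
  | pred k ih =>
      rw [zpow_sub_one (Pm_det_unit N), ih, Pm_inv, Matrix.mul_fin_two]
      have h2 : (omN N) ^ (2 * (-(k : ℤ) - 1)) =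
          (omN N) ^ (2 * (-(k : ℤ))) * (omN N) ^ (-2 : ℤ) := by
        rw [← zpow_add₀ (omN_ne N)]
        ring_nf
      simp [h2]

lemma zpow_sum' (N : ℕ) {n : ℕ} (c : Fin n → ℤ) :
    (omN N) ^ (∑ i, c i) = ∏ i, (omN N) ^ (c i) := by
  classical
  induction (Finset.univ : Finset (Fin n)) using Finset.induction with
  | empty => simp
  | insert a s h ih => simp [Finset.sum_insert h, Finset.prod_insert h, zpow_add₀ (omN_ne N), ih]

lemma single_sq (N : ℕ) (x z : ℤ) (hx : x = 0 ∨ x = 1) :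
    (Xm ^ x * Pm N ^ z) * (Xm ^ x * Pm N ^ z)
      = (omN N) ^ (2 * x * z) • (Pm N ^ (2 * z) * Pm N ^ (-(2 * x * z))) := by
  rcases hx with h | h
  · subst h
    have h2 : (2 : ℤ) * z = z + z := by ring
    simp [h2, zpow_add (Pm_det_unit N)]
  · subst h
    have h1 : Xm ^ (1 : ℤ) = Xm := zpow_one Xm
    have h2 : (2 : ℤ) * 1 * z = 2 * z := by ring
    rw [h1, h2, Pm_zpow, Pm_zpow, Pm_zpow]
    have h3 : (omN N) ^ (2 * z) * (omN N) ^ (-(2 * z)) = 1 := by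
      rw [← zpow_add₀ (omN_ne N)]; simp
    have h4 : (omN N) ^ (-(2 * z)) = ((omN N) ^ (2 * z))⁻¹ := by
      rw [_root_.zpow_neg]
    have h5 : (omN N) ^ (2 * z) ≠ 0 := zpow_ne_zero _ (omN_ne N)
    rw [Xm, Matrix.mul_fin_two, Matrix.mul_fin_two, Matrix.mul_fin_two]
    ext i j
    fin_cases i <;> fin_cases j <;>
      simp [Matrix.smul_apply, h4, smul_eq_mul] <;> field_simp <;>
      rw [div_self (zpow_ne_zero _ (omN_ne N))]

lemma tensor_mul {n : ℕ} (A B : Fin n → Matrix (Fin 2) (Fin 2) ℂ) (f g : Fin n → Fin 2) :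
    ∑ e : Fin n → Fin 2, (∏ i, A i (f i) (e i)) * ∏ i, B i (e i) (g i)
      = ∏ i, (A i * B i) (f i) (g i) := by
  simp only [Matrix.mul_apply]
  rw [Fintype.prod_sum]
  exact Finset.sum_congr rfl fun e _ => (Finset.prod_mul_distrib).symm

/-- **Square rule for XP operators** (SQ):
`(XP_N(p|x|z))² = XP_N(2p|0|2z) ⬝ D_N(2 x z)`; in particular the square of any XP operator
with binary x-component is a diagonal XP operator. -/
theorem XP_sq (N n : ℕ) (hN : 2 ≤ N) (hn : 1 ≤ n) (p : ℤ) (x z : Fin n → ℤ)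
    (hx : IsBinary x) :
    (XP N n p x z) ^ 2 = XP N n (2 * p) 0 (2 • z) * DN N n (2 • (x * z)) := by
  ext f g
  rw [sq]
  show ((XP N n p x z) * (XP N n p x z)) f g = _
  rw [Matrix.mul_apply, Matrix.mul_apply]
  simp only [XP, DN, Matrix.of_apply, Pi.zero_apply, Pi.smul_apply,
    Pi.neg_apply, Pi.mul_apply, nsmul_eq_mul, Pi.natCast_apply, Pi.ofNat_apply, Nat.cast_ofNat]
  have L : ∑ e : Fin n → Fin 2,
      (omN N ^ p * ∏ i, (Xm ^ x i * Pm N ^ z i) (f i) (e i)) *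
      (omN N ^ p * ∏ i, (Xm ^ x i * Pm N ^ z i) (e i) (g i))
      = omN N ^ p * omN N ^ p *
        ∏ i, ((Xm ^ x i * Pm N ^ z i) * (Xm ^ x i * Pm N ^ z i)) (f i) (g i) := by
    rw [← tensor_mul, Finset.mul_sum]
    exact Finset.sum_congr rfl fun e _ => by ring
  have R : ∑ e : Fin n → Fin 2,
      (omN N ^ (2 * p) * ∏ i, (Xm ^ (0 : ℤ) * Pm N ^ (2 * z i)) (f i) (e i)) *
      (omN N ^ (∑ i, 2 * (x i * z i)) *
        ∏ i, (Xm ^ (0 : ℤ) * Pm N ^ (-(2 * (x i * z i)))) (e i) (g i))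
      = omN N ^ (2 * p) * omN N ^ (∑ i, 2 * (x i * z i)) *
        ∏ i, ((Xm ^ (0 : ℤ) * Pm N ^ (2 * z i)) * (Xm ^ (0 : ℤ) * Pm N ^ (-(2 * (x i * z i)))))
          (f i) (g i) := by
    rw [← tensor_mul, Finset.mul_sum]
    exact Finset.sum_congr rfl fun e _ => by ring
  rw [L, R]
  have hp : omN N ^ p * omN N ^ p = omN N ^ (2 * p) := by
    rw [← zpow_add₀ (omN_ne N)]; ring_nf
  rw [hp]
  rw [mul_assoc, zpow_sum' N fun i => 2 * (x i * z i), ← Finset.prod_mul_distrib]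
  congr 1
  apply Finset.prod_congr rfl
  intro i _
  rw [single_sq N (x i) (z i) (hx i)]
  simp [mul_assoc]
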